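/- Let K ≥ 2, 1 ≤ t < K, t ≤ α ≤ K - t, and consider the interference indicator set R_j^r(n) = { k ∈ k_j^r \ {k_j^r[n]} : V[p_j^r[n], k] = 0 }, with V the cyclic placement matrix and k_j^r, p_j^r the cyclic-caching user/packet vectors. Then |R_j^r(n)| = α - 1 for every j ∈ [K-t], r ∈ [K], n ∈ [t+α]. -/

import Mathlib

/-- The mod operator with offset one. -/
def pmod (a b : ℕ) : ℕ := (a - 1) % b + 1

/-- The cyclic placement matrix: `V K t p k = 1` iff `(k - p) mod K ∈ {0,…,t-1}`. -/
noncomputable def V (K t p k : ℕ) : ℕ :=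
  if ((k : ℤ) - (p : ℤ)) % (K : ℤ) ∈ Finset.Ico (0 : ℤ) (t : ℤ) then 1 else 0

/-- Entry `n` of the round-1 user index vector `k_j¹`. -/
def kvec1 (K t j n : ℕ) : ℕ :=
  if n ≤ t then n else pmod (n - t + j - 1) (K - t) + t

/-- Entry `n` of the round-1 packet index vector `p_j¹`. -/
def pvec1 (K t j n : ℕ) : ℕ :=
  if n ≤ t then pmod (t + j - n) (K - t) + n else 1

/-- Entry `n` of the round-`r` user index vector `k_j^r = (k_j¹ + r) % K`. -/
def kvec (K t j r n : ℕ) : ℕ := pmod (kvec1 K t j n + r) K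

/-- Entry `n` of the round-`r` packet index vector `p_j^r = (p_j¹ + r) % K`. -/
def pvec (K t j r n : ℕ) : ℕ := pmod (pvec1 K t j n + r) K

/-- The interference indicator set `R_j^r(n)`. -/
noncomputable def Rset (K t α j r n : ℕ) : Finset ℕ :=
  (((Finset.Icc 1 (t + α)).image (fun m => kvec K t j r m)).filter
    (fun k => k ≠ kvec K t j r n ∧ V K t (pvec K t j r n) k = 0))

namespace CCaux

lemma modeq_eq {n a b : ℕ} (h : a ≡ b [MOD n]) (h1 : a < b + n) (h2 : b < a + n) : a = b := by
  rcases le_total a b with hle | hle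
  · have hd := (Nat.modEq_iff_dvd' hle).mp h
    have h0 : b - a = 0 := Nat.eq_zero_of_dvd_of_lt hd (by omega)
    omega
  · have hd := (Nat.modEq_iff_dvd' hle).mp h.symm
    have h0 : a - b = 0 := Nat.eq_zero_of_dvd_of_lt hd (by omega)
    omega

lemma pmod_pos (a b : ℕ) : 1 ≤ pmod a b := Nat.le_add_left 1 _

lemma pmod_le {b : ℕ} (hb : 0 < b) (a : ℕ) : pmod a b ≤ b := by
  have := Nat.mod_lt (a - 1) hb
  unfold pmod; omega

lemma pmod_modeq {a : ℕ} (b : ℕ) (ha : 1 ≤ a) : pmod a b ≡ a [MOD b] := by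
  have h1 : (a - 1) % b ≡ a - 1 [MOD b] := Nat.mod_modEq _ _
  have h2 := h1.add_right 1
  unfold pmod
  simpa [Nat.sub_add_cancel ha] using h2

lemma pmod_inj {b a1 a2 : ℕ} (h1 : 1 ≤ a1) (h2 : 1 ≤ a2)
    (hd1 : a1 < a2 + b) (hd2 : a2 < a1 + b) (h : pmod a1 b = pmod a2 b) : a1 = a2 := by
  have m1 := pmod_modeq b h1
  have m2 := pmod_modeq b h2
  rw [← h] at m2
  exact modeq_eq (m1.symm.trans m2) hd1 hd2

lemma pmod_eq {x a b : ℕ} (hb : 0 < b) (hx1 : 1 ≤ x) (hxb : x ≤ b) (ha : 1 ≤ a)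
    (h : x ≡ a [MOD b]) : pmod a b = x := by
  have hle := pmod_le hb a
  have hpos := pmod_pos a b
  exact modeq_eq ((pmod_modeq b ha).trans h.symm) (by omega) (by omega)

lemma pmod_eq_self {a b : ℕ} (hb : 0 < b) (h1 : 1 ≤ a) (h2 : a ≤ b) : pmod a b = a :=
  pmod_eq hb h1 h2 h1 Nat.ModEq.rfl

lemma pmod_pmod_add {b : ℕ} (hb : 0 < b) {a : ℕ} (ha : 1 ≤ a) (c : ℕ) :
    pmod (pmod a b + c) b = pmod (a + c) b := by
  have hpos := pmod_pos a b
  refine pmod_eq hb (pmod_pos _ _) (pmod_le hb _) (by omega) ?_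
  exact (pmod_modeq b (by omega)).trans ((pmod_modeq b ha).add_right c).symm

lemma pmod_int_modeq {a b : ℕ} (ha : 1 ≤ a) :
    (pmod a b : ℤ) ≡ (a : ℤ) [ZMOD (b : ℤ)] :=
  Int.natCast_modEq_iff.mpr (pmod_modeq b ha)

lemma V_one_or_zero (K t p k : ℕ) : V K t p k = 0 ∨ V K t p k = 1 := by
  unfold V; split <;> simp

lemma V_shift {K t p k : ℕ} (r : ℕ) (hp : 1 ≤ p) (hk : 1 ≤ k) :
    V K t (pmod (p + r) K) (pmod (k + r) K) = V K t p k := by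
  have h1 : (pmod (k + r) K : ℤ) ≡ ((k : ℕ) + r : ℕ) [ZMOD (K : ℤ)] :=
    pmod_int_modeq (by omega)
  have h2 : (pmod (p + r) K : ℤ) ≡ ((p : ℕ) + r : ℕ) [ZMOD (K : ℤ)] :=
    pmod_int_modeq (by omega)
  have h3 := h1.sub h2
  have h4 : (((k : ℕ) + r : ℕ) : ℤ) - (((p : ℕ) + r : ℕ) : ℤ) = (k : ℤ) - p := by
    push_cast; ring
  rw [h4] at h3
  unfold V
  rw [h3.eq]

lemma V_at_pmod {K t p : ℕ} (hK : 0 < K) (htK : t ≤ K) (hp : 1 ≤ p) {v : ℕ} (hv : v < t) :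
    V K t p (pmod (p + v) K) = 1 := by
  have h1 : (pmod (p + v) K : ℤ) ≡ ((p + v : ℕ) : ℤ) [ZMOD (K : ℤ)] :=
    pmod_int_modeq (by omega)
  have h2 := h1.sub (Int.ModEq.refl (p : ℤ))
  have h3 : ((p + v : ℕ) : ℤ) - (p : ℤ) = (v : ℤ) := by push_cast; ring
  rw [h3] at h2
  have h4 : (v : ℤ) % (K : ℤ) = (v : ℤ) :=
    Int.emod_eq_of_lt (by positivity) (by exact_mod_cast (by omega : v < K))
  unfold V
  rw [if_pos]
  rw [h2.eq, h4]
  simp only [Finset.mem_Ico]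
  constructor
  · positivity
  · exact_mod_cast hv

lemma exists_of_V_one {K t p k : ℕ} (hK : 0 < K) (htK : t ≤ K) (hp : 1 ≤ p)
    (hk1 : 1 ≤ k) (hkK : k ≤ K) (h : V K t p k = 1) :
    ∃ v, v < t ∧ k = pmod (p + v) K := by
  unfold V at h
  split at h
  · rename_i hmem
    simp only [Finset.mem_Ico] at hmem
    set e : ℤ := ((k : ℤ) - p) % K with he
    refine ⟨e.toNat, by omega, ?_⟩
    have hve : (e.toNat : ℤ) = e := Int.toNat_of_nonneg hmem.1
    have hmod : ((k : ℤ) - p) % K = e % K := by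
      rw [← he]
      exact (Int.emod_emod_of_dvd _ dvd_rfl).symm
    have hcong : (k : ℤ) ≡ ((p + e.toNat : ℕ) : ℤ) [ZMOD (K : ℤ)] := by
      have : (k : ℤ) - p ≡ e [ZMOD (K : ℤ)] := hmod
      have h2 := this.add (Int.ModEq.refl (p : ℤ))
      have h3 : (k : ℤ) - p + p = (k : ℤ) := by ring
      rw [h3] at h2
      have h4 : e + (p : ℤ) = ((p + e.toNat : ℕ) : ℤ) := by push_cast; omega
      rw [h4] at h2
      exact h2
    have hncong : k ≡ p + e.toNat [MOD K] := Int.natCast_modEq_iff.mp hcong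
    exact (pmod_eq hK hk1 hkK (by omega) hncong).symm
  · omega

section Main

variable {K t α j : ℕ}

lemma kvec1_range (ht : 1 ≤ t) (htK : t < K) (hj : 1 ≤ j) {m : ℕ} (hm : 1 ≤ m) :
    1 ≤ kvec1 K t j m ∧ kvec1 K t j m ≤ K := by
  unfold kvec1
  split
  · omega
  · have h1 := pmod_pos (m - t + j - 1) (K - t)
    have h2 := pmod_le (show 0 < K - t by omega) (m - t + j - 1)
    omega

lemma kvec1_inj (ht : 1 ≤ t) (htK : t < K) (hαK : α ≤ K - t) (hj : 1 ≤ j)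
    {m1 m2 : ℕ} (hm1 : 1 ≤ m1) (hm1' : m1 ≤ t + α) (hm2 : 1 ≤ m2) (hm2' : m2 ≤ t + α)
    (h : kvec1 K t j m1 = kvec1 K t j m2) : m1 = m2 := by
  unfold kvec1 at h
  split_ifs at h with h1 h2 h2
  · exact h
  · have := pmod_pos (m2 - t + j - 1) (K - t); omega
  · have := pmod_pos (m1 - t + j - 1) (K - t); omega
  · have h3 : m1 - t + j - 1 = m2 - t + j - 1 :=
      pmod_inj (by omega) (by omega) (by omega) (by omega) (by omega : pmod (m1 - t + j - 1) (K - t) = pmod (m2 - t + j - 1) (K - t))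
    omega

lemma pvec1_pos (ht : 1 ≤ t) (hj : 1 ≤ j) (n : ℕ) : 1 ≤ pvec1 K t j n := by
  unfold pvec1
  split
  · have := pmod_pos (t + j - n) (K - t); omega
  · omega

lemma V_self (ht : 1 ≤ t) (htK : t < K) (hj : 1 ≤ j) (hjK : j ≤ K - t)
    {n : ℕ} (hn : 1 ≤ n) :
    V K t (pvec1 K t j n) (kvec1 K t j n) = 0 := by
  have hK' : 0 < K - t := by omega
  have htKz : (t : ℤ) < K := by exact_mod_cast htK
  have hKtz : ((K - t : ℕ) : ℤ) = (K : ℤ) - t := by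
    have h : t ≤ K := le_of_lt htK
    omega
  by_cases hnt : n ≤ t
  · have hkv : kvec1 K t j n = n := by unfold kvec1; rw [if_pos hnt]
    have hpv : pvec1 K t j n = (t + j - n - 1) % (K - t) + 1 + n := by
      unfold pvec1 pmod; rw [if_pos hnt]
    set q := (t + j - n - 1) % (K - t) with hq
    have hqlt : q < K - t := Nat.mod_lt _ hK'
    have hqz : (q : ℤ) ≤ (K : ℤ) - t - 1 := by
      have : (q : ℤ) < ((K - t : ℕ) : ℤ) := by exact_mod_cast hqlt
      omega
    rw [hkv, hpv]
    have hval : ((n : ℤ) - ((q + 1 + n : ℕ) : ℤ)) % (K : ℤ) = (K : ℤ) - q - 1 := by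
      rw [show ((n : ℤ) - ((q + 1 + n : ℕ) : ℤ)) = ((K : ℤ) - q - 1) + (K : ℤ) * (-1) by
        push_cast; ring, Int.add_mul_emod_self_left]
      exact Int.emod_eq_of_lt (by omega) (by omega)
    unfold V
    rw [hval, if_neg]
    simp only [Finset.mem_Ico]
    omega
  · have hkv : kvec1 K t j n = (n - t + j - 1 - 1) % (K - t) + 1 + t := by
      unfold kvec1 pmod; rw [if_neg hnt]
    have hpv : pvec1 K t j n = 1 := by unfold pvec1; rw [if_neg hnt]
    set a := (n - t + j - 1 - 1) % (K - t) with ha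
    have halt : a < K - t := Nat.mod_lt _ hK'
    have haz : (a : ℤ) ≤ (K : ℤ) - t - 1 := by
      have : (a : ℤ) < ((K - t : ℕ) : ℤ) := by exact_mod_cast halt
      omega
    rw [hkv, hpv]
    have hval : (((a + 1 + t : ℕ) : ℤ) - ((1 : ℕ) : ℤ)) % (K : ℤ) = (a : ℤ) + t := by
      rw [show (((a + 1 + t : ℕ) : ℤ) - ((1 : ℕ) : ℤ)) = (a : ℤ) + t by push_cast; ring]
      exact Int.emod_eq_of_lt (by positivity) (by omega)
    unfold V
    rw [hval, if_neg]
    simp only [Finset.mem_Ico]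
    have : (0 : ℤ) ≤ a := by positivity
    omega

lemma cover (ht : 1 ≤ t) (htK : t < K) (htα : t ≤ α) (hαK : α ≤ K - t)
    (hj : 1 ≤ j) (hjK : j ≤ K - t) {n v : ℕ} (hn1 : 1 ≤ n) (hn2 : n ≤ t + α) (hv : v < t) :
    ∃ m, 1 ≤ m ∧ m ≤ t + α ∧ kvec1 K t j m = pmod (pvec1 K t j n + v) K := by
  have hK0 : 0 < K := by omega
  have hK' : 0 < K - t := by omega
  have hPpos := pvec1_pos (j := j) (K := K) ht hj n
  set x := pmod (pvec1 K t j n + v) K with hx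
  have hx1 : 1 ≤ x := pmod_pos _ _
  have hxK : x ≤ K := pmod_le hK0 _
  by_cases hxt : x ≤ t
  · refine ⟨x, hx1, by omega, ?_⟩
    unfold kvec1
    rw [if_pos hxt]
  · have hnt : n ≤ t := by
      by_contra hcon
      have hp1 : pvec1 K t j n = 1 := by unfold pvec1; rw [if_neg (by omega)]
      have : x = 1 + v := by
        rw [hx, hp1]
        exact pmod_eq_self hK0 (by omega) (by omega)
      omega
    have hpP : pvec1 K t j n = (t + j - n - 1) % (K - t) + 1 + n := by
      unfold pvec1 pmod; rw [if_pos hnt]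
    set q := (t + j - n - 1) % (K - t) with hq
    have hqlt : q < K - t := Nat.mod_lt _ hK'
    have hxval : x = q + 1 + n + v := by
      have hcong : x ≡ q + 1 + n + v [MOD K] := by
        rw [hx, hpP]
        exact pmod_modeq K (by omega)
      exact modeq_eq hcong (by omega) (by omega)
    refine ⟨t + 1 + v, by omega, by omega, ?_⟩
    have hk : kvec1 K t j (t + 1 + v) = (v + j - 1) % (K - t) + 1 + t := by
      unfold kvec1 pmod
      rw [if_neg (by omega), show t + 1 + v - t + j - 1 - 1 = v + j - 1 by omega]
    set a := (v + j - 1) % (K - t) with haa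
    have halt : a < K - t := Nat.mod_lt _ hK'
    rw [hk]
    have hc1 : a + 1 + t ≡ v + j + t [MOD K - t] := by
      calc a + 1 + t ≡ v + j - 1 + 1 + t [MOD K - t] :=
            ((Nat.mod_modEq _ _).add_right 1).add_right t
        _ = v + j + t := by omega
    have hc2 : q + 1 + n + v ≡ v + j + t [MOD K - t] := by
      calc q + 1 + n + v ≡ t + j - n - 1 + 1 + n + v [MOD K - t] :=
            (((Nat.mod_modEq _ _).add_right 1).add_right n).add_right v
        _ = v + j + t := by omega
    have hcong : a + 1 + t ≡ x [MOD K - t] := by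
      rw [hxval]
      exact hc1.trans hc2.symm
    exact modeq_eq hcong (by omega) (by omega)

end Main

end CCaux

open CCaux

theorem interference_set_card (K t α : ℕ) (hK : 2 ≤ K) (ht : 1 ≤ t) (htK : t < K)
    (htα : t ≤ α) (hαK : α ≤ K - t) :
    ∀ j ∈ Finset.Icc 1 (K - t), ∀ r ∈ Finset.Icc 1 K, ∀ n ∈ Finset.Icc 1 (t + α),
      (Rset K t α j r n).card = α - 1 := by
  intro j hj r hr n hn
  simp only [Finset.mem_Icc] at hj hr hn
  obtain ⟨hj1, hj2⟩ := hj
  obtain ⟨hr1, hr2⟩ := hr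
  obtain ⟨hn1, hn2⟩ := hn
  have hK0 : 0 < K := by omega
  have hK' : 0 < K - t := by omega
  have hk1r : ∀ m, 1 ≤ m → 1 ≤ kvec1 K t j m ∧ kvec1 K t j m ≤ K :=
    fun m hm => kvec1_range ht htK hj1 hm
  have hPpos1 := pvec1_pos (j := j) (K := K) ht hj1 n
  -- injectivity of kvec on Icc 1 (t+α)
  have hinj : ∀ m1 ∈ Finset.Icc 1 (t + α), ∀ m2 ∈ Finset.Icc 1 (t + α),
      kvec K t j r m1 = kvec K t j r m2 → m1 = m2 := by
    intro m1 hm1 m2 hm2 h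
    simp only [Finset.mem_Icc] at hm1 hm2
    unfold kvec at h
    have r1 := hk1r m1 hm1.1
    have r2 := hk1r m2 hm2.1
    have := pmod_inj (b := K) (by omega) (by omega) (by omega) (by omega) h
    exact kvec1_inj ht htK hαK hj1 hm1.1 hm1.2 hm2.1 hm2.2 (by omega)
  set A := (Finset.Icc 1 (t + α)).image (fun m => kvec K t j r m) with hA
  have hcardA : A.card = t + α := by
    rw [hA, Finset.card_image_of_injOn (fun a ha b hb h => hinj a ha b hb h),
      Nat.card_Icc]
    omega
  set c := kvec K t j r n with hc
  set P := pvec K t j r n with hP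
  have hcA : c ∈ A := Finset.mem_image.mpr ⟨n, Finset.mem_Icc.mpr ⟨hn1, hn2⟩, rfl⟩
  have hPpos : 1 ≤ P := pmod_pos _ _
  have hVshift : ∀ m, 1 ≤ m →
      V K t P (kvec K t j r m) = V K t (pvec1 K t j n) (kvec1 K t j m) := by
    intro m hm
    rw [hP]
    unfold pvec kvec
    exact V_shift r hPpos1 (hk1r m hm).1
  have hVc : V K t P c = 0 := by
    rw [hc, hVshift n hn1]
    exact V_self ht htK hj1 hj2 hn1
  have hAmem : ∀ k ∈ A, 1 ≤ k ∧ k ≤ K := by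
    intro k hk
    rw [hA] at hk
    obtain ⟨m, hm, rfl⟩ := Finset.mem_image.mp hk
    unfold kvec
    exact ⟨pmod_pos _ _, pmod_le hK0 _⟩
  -- the cached set B
  set B := A.filter (fun k => V K t P k = 1) with hB
  have hBeq : B = (Finset.range t).image (fun v => pmod (P + v) K) := by
    apply Finset.Subset.antisymm
    · intro k hk
      rw [hB, Finset.mem_filter] at hk
      obtain ⟨hkA, hkV⟩ := hk
      obtain ⟨hk1, hkK⟩ := hAmem k hkA
      obtain ⟨v, hv, hveq⟩ := exists_of_V_one hK0 (by omega) hPpos hk1 hkK hkV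
      exact Finset.mem_image.mpr ⟨v, Finset.mem_range.mpr hv, hveq.symm⟩
    · intro x hx
      obtain ⟨v, hv, rfl⟩ := Finset.mem_image.mp hx
      rw [Finset.mem_range] at hv
      rw [hB, Finset.mem_filter]
      refine ⟨?_, V_at_pmod hK0 (by omega) hPpos hv⟩
      -- membership in A
      obtain ⟨m, hm1, hm2, hmk⟩ := cover ht htK htα hαK hj1 hj2 hn1 hn2 hv
      rw [hA, Finset.mem_image]
      refine ⟨m, Finset.mem_Icc.mpr ⟨hm1, hm2⟩, ?_⟩
      show pmod (kvec1 K t j m + r) K = pmod (P + v) K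
      rw [hmk, hP]
      show pmod (pmod (pvec1 K t j n + v) K + r) K = pmod (pmod (pvec1 K t j n + r) K + v) K
      rw [pmod_pmod_add hK0 (by omega) r, pmod_pmod_add hK0 (by omega) v]
      congr 1
      omega
  have hcardB : B.card = t := by
    rw [hBeq, Finset.card_image_of_injOn, Finset.card_range]
    intro v1 hv1 v2 hv2 h
    simp only [Finset.coe_range, Set.mem_Iio] at hv1 hv2
    have := pmod_inj (b := K) (by omega) (by omega) (by omega) (by omega) h
    omega
  have hcB : c ∉ B := by
    rw [hB, Finset.mem_filter]
    rintro ⟨-, hc1⟩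
    omega
  have hsplit := Finset.card_filter_add_card_filter_not
    (s := A) (p := fun k => k ≠ c ∧ V K t P k = 0)
  have hneg : A.filter (fun k => ¬(k ≠ c ∧ V K t P k = 0)) = insert c B := by
    ext k
    simp only [Finset.mem_filter, Finset.mem_insert, hB, not_and_or, not_not]
    constructor
    · rintro ⟨hkA, hor⟩
      rcases hor with h | h
      · exact Or.inl h
      · rcases V_one_or_zero K t P k with h0 | h1
        · omega
        · exact Or.inr ⟨hkA, h1⟩
    · rintro (rfl | ⟨hkA, h1⟩)
      · exact ⟨hcA, Or.inl rfl⟩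
      · exact ⟨hkA, Or.inr (by omega)⟩
  have hinsert : (insert c B).card = t + 1 := by
    rw [Finset.card_insert_of_notMem hcB, hcardB]
  have hRA : Rset K t α j r n = A.filter (fun k => k ≠ c ∧ V K t P k = 0) := rfl
  rw [hRA]
  rw [hneg, hinsert, hcardA] at hsplit
  omega
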